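/- arXiv:2103.04161 — 2 statements merged into one kernel-verified Lean document; each statement's English description precedes it below -/
import Mathlib

section
/- Let P : R^d → R be continuous and positive definite, and suppose Exp(P) contains an endomorphism E whose spectrum is real. Then the group r^E is contracting, and hence P is positive homogeneous. -/
open MeasureTheory Filter Set
open Filter Polynomial
open scoped Nat
set_option synthInstance.maxHeartbeats 400000
set_option maxHeartbeats 1000000

section AuxGeneral

variable {V : Type*} [NormedAddCommGroup V] [NormedSpace ℝ V] [CompleteSpace V]

theorem exp_apply (A : V →L[ℝ] V) (x : V) :
    NormedSpace.exp A x = ∑' n : ℕ, ((n ! : ℝ)⁻¹) • (A ^ n) x := by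
  rw [NormedSpace.exp_eq_tsum ℝ]
  exact ((ContinuousLinearMap.apply ℝ V x).map_tsum
    (NormedSpace.expSeries_summable' (𝕂 := ℝ) A)).trans (by simp)

theorem exp_apply_eig {A : V →L[ℝ] V} {c : ℝ} {x : V} (h : A x = c • x) :
    NormedSpace.exp A x = Real.exp c • x := by
  have hp : ∀ n : ℕ, (A ^ n) x = c ^ n • x := by
    intro n
    induction n with
    | zero => simp
    | succ k ih =>
      rw [pow_succ, ContinuousLinearMap.mul_apply, h, _root_.map_smul, ih, smul_smul, pow_succ, mul_comm]
  rw [exp_apply]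
  have hs : Summable fun n : ℕ => ((n ! : ℝ)⁻¹) * c ^ n := by
    simpa [smul_eq_mul] using NormedSpace.expSeries_summable' (𝕂 := ℝ) (c : ℝ)
  calc ∑' n : ℕ, ((n ! : ℝ)⁻¹) • (A ^ n) x
      = ∑' n : ℕ, (((n ! : ℝ)⁻¹) * c ^ n) • x := by
        congr 1; funext n; rw [hp, smul_smul]
    _ = (∑' n : ℕ, ((n ! : ℝ)⁻¹) * c ^ n) • x := hs.tsum_smul_const x
    _ = Real.exp c • x := by
        congr 1
        rw [Real.exp_eq_exp_ℝ, NormedSpace.exp_eq_tsum ℝ]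
        simp [smul_eq_mul]

theorem exp_apply_nilp {A : V →L[ℝ] V} {m : ℕ} {x : V} (h : (A ^ m) x = 0) :
    NormedSpace.exp A x = ∑ k ∈ Finset.range m, ((k ! : ℝ)⁻¹) • (A ^ k) x := by
  rw [exp_apply]
  apply tsum_eq_sum
  intro k hk
  have hk' : m ≤ k := by simpa using hk
  have : (A ^ k) x = 0 := by
    have : A ^ k = A ^ (k - m) * A ^ m := by rw [← pow_add]; congr 1; omega
    rw [this, ContinuousLinearMap.mul_apply, h, map_zero]
  rw [this, smul_zero]

theorem tendsto_exp_neg_genEig {E : V →L[ℝ] V} {μ : ℝ} (hμ : 0 < μ) {m : ℕ} {x : V}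
    (h : ((E - μ • (1 : V →L[ℝ] V)) ^ m) x = 0) :
    Tendsto (fun t : ℝ => NormedSpace.exp ((-t) • E) x) atTop (nhds 0) := by
  set N : V →L[ℝ] V := E - μ • (1 : V →L[ℝ] V) with hN
  have hsplit : ∀ t : ℝ, (-t) • E = (-(t * μ)) • (1 : V →L[ℝ] V) + (-t) • N := by
    intro t; rw [hN]; module
  have hcomm : ∀ t : ℝ, Commute ((-(t * μ)) • (1 : V →L[ℝ] V)) ((-t) • N) :=
    fun t => ((Commute.one_left N).smul_left _).smul_right _
  have hrepr : ∀ t : ℝ, NormedSpace.exp ((-t) • E) x =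
      ∑ k ∈ Finset.range m, (Real.exp (-(t * μ)) * (((k ! : ℝ)⁻¹) * (-t) ^ k)) • (N ^ k) x := by
    intro t
    let +nondep : NormedAlgebra ℚ (V →L[ℝ] V) := .restrictScalars ℚ ℝ _
    rw [hsplit t, NormedSpace.exp_add_of_commute (hcomm t), ContinuousLinearMap.mul_apply]
    have h1 : NormedSpace.exp ((-t) • N) x
        = ∑ k ∈ Finset.range m, ((k ! : ℝ)⁻¹) • (((-t) • N) ^ k) x := by
      apply exp_apply_nilp
      rw [_root_.smul_pow, ContinuousLinearMap.smul_apply, h, smul_zero]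
    rw [h1, map_sum]
    apply Finset.sum_congr rfl
    intro k _
    rw [_root_.map_smul, _root_.smul_pow, ContinuousLinearMap.smul_apply]
    have h2 : NormedSpace.exp ((-(t * μ)) • (1 : V →L[ℝ] V)) ((N ^ k) x)
        = Real.exp (-(t * μ)) • (N ^ k) x := by
      apply exp_apply_eig
      simp
    rw [_root_.map_smul, h2, smul_smul, smul_smul]
    congr 1
    ring
  rw [tendsto_congr hrepr]
  have : Tendsto (fun t : ℝ => ∑ k ∈ Finset.range m,
      (Real.exp (-(t * μ)) * (((k ! : ℝ)⁻¹) * (-t) ^ k)) • (N ^ k) x) atTop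
      (nhds (∑ k ∈ Finset.range m, (0 : V))) := by
    apply tendsto_finset_sum
    intro k _
    have hcoef : Tendsto (fun t : ℝ => Real.exp (-(t * μ)) * (((k ! : ℝ)⁻¹) * (-t) ^ k))
        atTop (nhds 0) := by
      have hbase : Tendsto (fun t : ℝ => (μ * t) ^ k * Real.exp (-(μ * t))) atTop (nhds 0) :=
        (Real.tendsto_pow_mul_exp_neg_atTop_nhds_zero k).comp (tendsto_id.const_mul_atTop hμ)
      have heq : ∀ t : ℝ, Real.exp (-(t * μ)) * (((k ! : ℝ)⁻¹) * (-t) ^ k)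
          = (((k ! : ℝ)⁻¹) * (-1) ^ k * (μ ^ k)⁻¹) * ((μ * t) ^ k * Real.exp (-(μ * t))) := by
        intro t
        have hμk : (μ : ℝ) ^ k ≠ 0 := pow_ne_zero _ hμ.ne'
        rw [mul_comm t μ]
        field_simp
        ring
      rw [tendsto_congr heq]
      simpa using hbase.const_mul (((k ! : ℝ)⁻¹) * (-1) ^ k * (μ ^ k)⁻¹)
    simpa using hcoef.smul_const ((N ^ k) x)
  simpa using this

theorem commute_smul_smul (A : V →L[ℝ] V) (a b : ℝ) : Commute (a • A) (b • A) :=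
  ((Commute.refl A).smul_left a).smul_right b

end AuxGeneral


/-- The continuous one-parameter group `T_r = r^E = exp((ln r) E)` generated by an
endomorphism `E` of `ℝ^d`. -/
noncomputable def Tgrp {d : ℕ} (E : EuclideanSpace ℝ (Fin d) →L[ℝ] EuclideanSpace ℝ (Fin d))
    (r : ℝ) : EuclideanSpace ℝ (Fin d) →L[ℝ] EuclideanSpace ℝ (Fin d) :=
  NormedSpace.exp (Real.log r • E)

/-- The group `{T_r}` is contracting: `‖T_r‖ → 0` as `r → 0⁺` (operator norm). -/
def IsContracting {d : ℕ} (E : EuclideanSpace ℝ (Fin d) →L[ℝ] EuclideanSpace ℝ (Fin d)) : Prop :=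
  Tendsto (fun r : ℝ => ‖Tgrp E r‖) (nhdsWithin 0 (Set.Ioi 0)) (nhds 0)


/-- `E` is an exponent of `P`: `P(r^E x) = r · P(x)` for all `r > 0` and `x ∈ ℝ^d`. -/
def IsExpOf {d : ℕ} (P : EuclideanSpace ℝ (Fin d) → ℝ)
    (E : EuclideanSpace ℝ (Fin d) →L[ℝ] EuclideanSpace ℝ (Fin d)) : Prop :=
  ∀ r : ℝ, 0 < r → ∀ x : EuclideanSpace ℝ (Fin d), P (Tgrp E r x) = r * P x

/-- `P` is positive homogeneous: continuous, positive definite, possesses an exponent,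
and `P(x) → ∞` as `|x| → ∞`. -/
def IsPosHom {d : ℕ} (P : EuclideanSpace ℝ (Fin d) → ℝ) : Prop :=
  Continuous P ∧ (∀ x, 0 ≤ P x) ∧ (∀ x, P x = 0 → x = 0) ∧ (∃ E, IsExpOf P E) ∧
    Tendsto P (Filter.cocompact (EuclideanSpace ℝ (Fin d))) Filter.atTop

theorem Tgrp_eig {d : ℕ} (E : EuclideanSpace ℝ (Fin d) →L[ℝ] EuclideanSpace ℝ (Fin d))
    {μ : ℝ} {v : EuclideanSpace ℝ (Fin d)} (hev : E v = μ • v) (r : ℝ) :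
    Tgrp E r v = Real.exp (Real.log r * μ) • v := by
  apply exp_apply_eig
  rw [ContinuousLinearMap.smul_apply, hev, smul_smul]

theorem eig_pos {d : ℕ} {P : EuclideanSpace ℝ (Fin d) → ℝ}
    (hc : Continuous P) (hnn : ∀ x, 0 ≤ P x) (hpd : ∀ x, P x = 0 → x = 0)
    {E : EuclideanSpace ℝ (Fin d) →L[ℝ] EuclideanSpace ℝ (Fin d)} (hE : IsExpOf P E)
    {μ : ℝ} {v : EuclideanSpace ℝ (Fin d)} (hv : v ≠ 0) (hev : E v = μ • v) : 0 < μ := by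
  have hP0 : P 0 = 0 := by
    have h := hE 2 two_pos 0
    rw [map_zero] at h
    linarith
  have hPv : 0 < P v := by
    rcases (hnn v).lt_or_eq with h | h
    · exact h
    · exact absurd (hpd v h.symm) hv
  by_contra hμ
  push_neg at hμ
  rcases hμ.lt_or_eq with hlt | heq
  · -- μ < 0
    have key : ∀ t : ℝ, P (Real.exp (t * μ) • v) = Real.exp t * P v := by
      intro t
      have h := hE (Real.exp t) (Real.exp_pos t) v
      rw [Tgrp_eig E hev, Real.log_exp] at h
      exact h
    have hlim1 : Tendsto (fun t : ℝ => P (Real.exp (t * μ) • v)) atTop (nhds 0) := by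
      have h1 : Tendsto (fun t : ℝ => t * μ) atTop atBot :=
        tendsto_id.atTop_mul_const_of_neg hlt
      have h2 : Tendsto (fun t : ℝ => Real.exp (t * μ) • v) atTop (nhds ((0 : ℝ) • v)) :=
        (Real.tendsto_exp_atBot.comp h1).smul_const v
      rw [zero_smul] at h2
      have := (hc.tendsto 0).comp h2
      simpa [hP0, Function.comp_def] using this
    have hlim2 : Tendsto (fun t : ℝ => P (Real.exp (t * μ) • v)) atTop atTop := by
      rw [tendsto_congr key]
      exact Real.tendsto_exp_atTop.atTop_mul_const hPv
    exact not_tendsto_atTop_of_tendsto_nhds hlim1 hlim2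
  · -- μ = 0
    have h := hE 2 two_pos v
    rw [Tgrp_eig E hev, heq] at h
    simp at h
    linarith

theorem exists_eigvec {d : ℕ} (A : EuclideanSpace ℝ (Fin d) →L[ℝ] EuclideanSpace ℝ (Fin d)) :
    ∀ (m : ℕ) (x : EuclideanSpace ℝ (Fin d)), (A ^ m) x = 0 → x ≠ 0 →
      ∃ v, v ≠ 0 ∧ A v = 0 := by
  intro m
  induction m with
  | zero => intro x h hx; simp at h; exact absurd h hx
  | succ n ih =>
    intro x h hx
    by_cases hAx : A x = 0
    · exact ⟨x, hx, hAx⟩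
    · rw [pow_succ, ContinuousLinearMap.mul_apply] at h
      exact ih (A x) h hAx

theorem isCoprime_multiset_prod {R : Type*} [CommSemiring R] (a : R) (s : Multiset R)
    (h : ∀ b ∈ s, IsCoprime a b) : IsCoprime a s.prod := by
  induction s using Multiset.induction_on with
  | empty => simpa using isCoprime_one_right
  | cons c s ih =>
    rw [Multiset.prod_cons]
    exact (h c (Multiset.mem_cons_self c s)).mul_right
      (ih fun b hb => h b (Multiset.mem_cons_of_mem hb))

noncomputable def clmAlgHom (W : Type*) [NormedAddCommGroup W] [NormedSpace ℝ W] :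
    (W →L[ℝ] W) →ₐ[ℝ] (W →ₗ[ℝ] W) where
  toFun f := f.toLinearMap
  map_one' := rfl
  map_mul' _ _ := rfl
  map_zero' := rfl
  map_add' _ _ := rfl
  commutes' r := by
    ext x
    simp [Algebra.algebraMap_eq_smul_one]

theorem key_tendsto {d : ℕ} {P : EuclideanSpace ℝ (Fin d) → ℝ}
    (hc : Continuous P) (hnn : ∀ x, 0 ≤ P x) (hpd : ∀ x, P x = 0 → x = 0)
    {E : EuclideanSpace ℝ (Fin d) →L[ℝ] EuclideanSpace ℝ (Fin d)} (hE : IsExpOf P E)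
    (s : Multiset ℝ) :
    ∀ x : EuclideanSpace ℝ (Fin d),
      (Polynomial.aeval E ((s.map fun μ => X - C μ).prod)) x = 0 →
      Tendsto (fun t : ℝ => NormedSpace.exp ((-t) • E) x) atTop (nhds 0) := by
  induction s using Multiset.strongInductionOn with
  | ih s ihs =>
  intro x hx
  by_cases hs : s = 0
  · subst hs
    simp only [Multiset.map_zero, Multiset.prod_zero, map_one,
      ContinuousLinearMap.one_apply] at hx
    subst hx
    simp only [map_zero]
    exact tendsto_const_nhds
  · obtain ⟨l₀, hl₀⟩ := Multiset.exists_mem_of_ne_zero hs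
    set m := s.count l₀ with hm
    set t := s.filter (fun μ => ¬ μ = l₀) with ht
    have htlt : t < s := by
      apply lt_of_le_of_ne (Multiset.filter_le _ s)
      intro hts
      have hmem : l₀ ∈ t := by rw [ht, hts]; exact hl₀
      exact (Multiset.mem_filter.1 hmem).2 rfl
    set p : Polynomial ℝ := (X - C l₀) ^ m with hp
    set q : Polynomial ℝ := (t.map fun μ => X - C μ).prod with hq
    have hprod : ((s.map fun μ => X - C μ).prod : Polynomial ℝ) = p * q := by
      conv_lhs => rw [← Multiset.filter_add_not (fun μ => μ = l₀) s]
      rw [Multiset.map_add, Multiset.prod_add, Multiset.filter_eq', Multiset.map_replicate,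
        Multiset.prod_replicate]
    have hcop : IsCoprime p q := by
      apply IsCoprime.pow_left
      apply isCoprime_multiset_prod
      intro b hb
      obtain ⟨μ, hμt, rfl⟩ := Multiset.mem_map.1 hb
      have hne : l₀ - μ ≠ 0 :=
        sub_ne_zero.2 (fun h => (Multiset.mem_filter.1 hμt).2 h.symm)
      exact isCoprime_X_sub_C_of_isUnit_sub (isUnit_iff_ne_zero.2 hne)
    obtain ⟨a, b, hab⟩ := hcop
    have hpq0 : (Polynomial.aeval E (p * q)) x = 0 := by rw [← hprod]; exact hx
    have hdecomp : (Polynomial.aeval E (a * p)) x + (Polynomial.aeval E (b * q)) x = x := by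
      have h1 : Polynomial.aeval E (a * p) + Polynomial.aeval E (b * q)
          = (1 : EuclideanSpace ℝ (Fin d) →L[ℝ] EuclideanSpace ℝ (Fin d)) := by
        rw [← map_add, hab, map_one]
      rw [← ContinuousLinearMap.add_apply, h1, ContinuousLinearMap.one_apply]
    have hx1 : (Polynomial.aeval E q) ((Polynomial.aeval E (a * p)) x) = 0 := by
      rw [← ContinuousLinearMap.mul_apply, ← map_mul]
      have hring : q * (a * p) = a * (p * q) := by ring
      rw [hring, map_mul, ContinuousLinearMap.mul_apply, hpq0, map_zero]
    have htend1 := ihs t htlt _ hx1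
    have hx2 : ((E - l₀ • (1 : EuclideanSpace ℝ (Fin d) →L[ℝ] EuclideanSpace ℝ (Fin d))) ^ m)
        ((Polynomial.aeval E (b * q)) x) = 0 := by
      have haevp : Polynomial.aeval E p
          = (E - l₀ • (1 : EuclideanSpace ℝ (Fin d) →L[ℝ] EuclideanSpace ℝ (Fin d))) ^ m := by
        rw [hp, map_pow, map_sub, Polynomial.aeval_X, Polynomial.aeval_C,
          Algebra.algebraMap_eq_smul_one]
      rw [← haevp, ← ContinuousLinearMap.mul_apply, ← map_mul]
      have hring : p * (b * q) = b * (p * q) := by ring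
      rw [hring, map_mul, ContinuousLinearMap.mul_apply, hpq0, map_zero]
    have htend2 : Tendsto (fun t' : ℝ => NormedSpace.exp ((-t') • E)
        ((Polynomial.aeval E (b * q)) x)) atTop (nhds 0) := by
      by_cases h0 : (Polynomial.aeval E (b * q)) x = 0
      · rw [h0]
        simp only [map_zero]
        exact tendsto_const_nhds
      · obtain ⟨v, hv0, hv⟩ := exists_eigvec _ m _ hx2 h0
        have hev : E v = l₀ • v := by
          rw [ContinuousLinearMap.sub_apply, ContinuousLinearMap.smul_apply,
            ContinuousLinearMap.one_apply, sub_eq_zero] at hv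
          exact hv
        exact tendsto_exp_neg_genEig (eig_pos hc hnn hpd hE hv0 hev) hx2
    have heqfun : ∀ t' : ℝ, NormedSpace.exp ((-t') • E) x =
        NormedSpace.exp ((-t') • E) ((Polynomial.aeval E (a * p)) x) +
        NormedSpace.exp ((-t') • E) ((Polynomial.aeval E (b * q)) x) := by
      intro t'
      rw [← map_add, hdecomp]
    rw [tendsto_congr heqfun]
    simpa using htend1.add htend2

theorem aeval_charpoly_clm {d : ℕ}
    (E : EuclideanSpace ℝ (Fin d) →L[ℝ] EuclideanSpace ℝ (Fin d))
    (x : EuclideanSpace ℝ (Fin d)) :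
    (Polynomial.aeval E (LinearMap.charpoly
      (E : EuclideanSpace ℝ (Fin d) →ₗ[ℝ] EuclideanSpace ℝ (Fin d)))) x = 0 := by
  have h1 : (Polynomial.aeval ((clmAlgHom (EuclideanSpace ℝ (Fin d))) E)
      (LinearMap.charpoly (E : EuclideanSpace ℝ (Fin d) →ₗ[ℝ] EuclideanSpace ℝ (Fin d))))
      = (clmAlgHom (EuclideanSpace ℝ (Fin d))) (Polynomial.aeval E
      (LinearMap.charpoly (E : EuclideanSpace ℝ (Fin d) →ₗ[ℝ] EuclideanSpace ℝ (Fin d)))) :=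
    Polynomial.aeval_algHom_apply _ _ _
  have h2 : ((clmAlgHom (EuclideanSpace ℝ (Fin d))) E)
      = (E : EuclideanSpace ℝ (Fin d) →ₗ[ℝ] EuclideanSpace ℝ (Fin d)) := rfl
  have h3 := LinearMap.aeval_self_charpoly
    (E : EuclideanSpace ℝ (Fin d) →ₗ[ℝ] EuclideanSpace ℝ (Fin d))
  rw [h2] at h1
  rw [h3] at h1
  have h4 : ((clmAlgHom (EuclideanSpace ℝ (Fin d))) (Polynomial.aeval E
      (LinearMap.charpoly (E : EuclideanSpace ℝ (Fin d) →ₗ[ℝ] EuclideanSpace ℝ (Fin d))))) x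
      = (Polynomial.aeval E (LinearMap.charpoly
        (E : EuclideanSpace ℝ (Fin d) →ₗ[ℝ] EuclideanSpace ℝ (Fin d)))) x := rfl
  rw [← h4, ← h1]
  rfl

theorem opnorm_le_sum_basis {d : ℕ}
    (T : EuclideanSpace ℝ (Fin d) →L[ℝ] EuclideanSpace ℝ (Fin d)) :
    ‖T‖ ≤ ∑ i, ‖T (EuclideanSpace.basisFun (Fin d) ℝ i)‖ := by
  set b := EuclideanSpace.basisFun (Fin d) ℝ with hb
  refine T.opNorm_le_bound (Finset.sum_nonneg fun i _ => norm_nonneg _) (fun x => ?_)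
  have hx : T x = ∑ i, b.repr x i • T (b i) := by
    conv_lhs => rw [← b.sum_repr x]
    rw [map_sum]
    simp [_root_.map_smul]
  rw [hx]
  refine (norm_sum_le _ _).trans ?_
  rw [Finset.sum_mul]
  apply Finset.sum_le_sum
  intro i _
  rw [norm_smul]
  have hle : ‖b.repr x i‖ ≤ ‖x‖ := by
    rw [Real.norm_eq_abs, b.repr_apply_apply]
    calc |inner ℝ (b i) x| ≤ ‖b i‖ * ‖x‖ := abs_real_inner_le_norm _ _
      _ = ‖x‖ := by rw [b.orthonormal.1 i, one_mul]
  calc ‖b.repr x i‖ * ‖T (b i)‖ ≤ ‖x‖ * ‖T (b i)‖ :=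
        mul_le_mul_of_nonneg_right hle (norm_nonneg _)
    _ = ‖T (b i)‖ * ‖x‖ := mul_comm _ _

theorem contracting_of_hyps {d : ℕ} {P : EuclideanSpace ℝ (Fin d) → ℝ}
    (hc : Continuous P) (hnn : ∀ x, 0 ≤ P x) (hpd : ∀ x, P x = 0 → x = 0)
    {E : EuclideanSpace ℝ (Fin d) →L[ℝ] EuclideanSpace ℝ (Fin d)} (hE : IsExpOf P E)
    (hspec : (LinearMap.charpoly
      (E : EuclideanSpace ℝ (Fin d) →ₗ[ℝ] EuclideanSpace ℝ (Fin d))).Splits) :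
    IsContracting E := by
  set χ := LinearMap.charpoly (E : EuclideanSpace ℝ (Fin d) →ₗ[ℝ] EuclideanSpace ℝ (Fin d))
    with hχ
  have hfact : χ = (χ.roots.map fun μ => X - C μ).prod :=
    hspec.eq_prod_roots_of_monic (LinearMap.charpoly_monic _)
  have hCH : ∀ x : EuclideanSpace ℝ (Fin d),
      (Polynomial.aeval E ((χ.roots.map fun μ => X - C μ).prod)) x = 0 := by
    intro x
    rw [← hfact]
    exact aeval_charpoly_clm E x
  have hpt : ∀ x : EuclideanSpace ℝ (Fin d),
      Tendsto (fun t : ℝ => NormedSpace.exp ((-t) • E) x) atTop (nhds 0) :=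
    fun x => key_tendsto hc hnn hpd hE χ.roots x (hCH x)
  have hnorm : Tendsto (fun t : ℝ => ‖NormedSpace.exp ((-t) • E)‖) atTop (nhds 0) := by
    have hsum : Tendsto (fun t : ℝ =>
        ∑ i, ‖NormedSpace.exp ((-t) • E) (EuclideanSpace.basisFun (Fin d) ℝ i)‖)
        atTop (nhds 0) := by
      have h0 : Tendsto (fun t : ℝ => ∑ i : Fin d, (0 : ℝ)) atTop
          (nhds (∑ i : Fin d, (0 : ℝ))) := tendsto_const_nhds
      have := tendsto_finset_sum (Finset.univ : Finset (Fin d))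
        (fun i _ => ((hpt (EuclideanSpace.basisFun (Fin d) ℝ i)).norm))
      simpa using this
    exact squeeze_zero (fun t => norm_nonneg _) (fun t => opnorm_le_sum_basis _) hsum
  have hlog : Tendsto (fun r : ℝ => -Real.log r) (nhdsWithin 0 (Set.Ioi 0)) atTop :=
    tendsto_neg_atBot_atTop.comp Real.tendsto_log_nhdsGT_zero
  have := hnorm.comp hlog
  refine this.congr (fun r => ?_)
  simp only [Function.comp_apply, Tgrp, neg_neg]

theorem Tgrp_one {d : ℕ} (E : EuclideanSpace ℝ (Fin d) →L[ℝ] EuclideanSpace ℝ (Fin d)) :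
    Tgrp E 1 = 1 := by
  have h : Real.log 1 • E = (0 : EuclideanSpace ℝ (Fin d) →L[ℝ] EuclideanSpace ℝ (Fin d)) := by
    rw [Real.log_one]; module
  rw [Tgrp, h, NormedSpace.exp_zero]

theorem Tgrp_inv_apply {d : ℕ} (E : EuclideanSpace ℝ (Fin d) →L[ℝ] EuclideanSpace ℝ (Fin d))
    {r : ℝ} (hr : 0 < r) (x : EuclideanSpace ℝ (Fin d)) :
    Tgrp E r⁻¹ (Tgrp E r x) = x := by
  have hcomm : Commute (Real.log r⁻¹ • E) (Real.log r • E) :=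
    commute_smul_smul E _ _
  have hadd : Real.log r⁻¹ • E + Real.log r • E
      = (0 : EuclideanSpace ℝ (Fin d) →L[ℝ] EuclideanSpace ℝ (Fin d)) := by
    rw [Real.log_inv]; module
  have h : Tgrp E r⁻¹ * Tgrp E r = 1 := by
    let +nondep : NormedAlgebra ℚ (EuclideanSpace ℝ (Fin d) →L[ℝ] EuclideanSpace ℝ (Fin d)) :=
      .restrictScalars ℚ ℝ _
    rw [Tgrp, Tgrp, ← NormedSpace.exp_add_of_commute hcomm, hadd, NormedSpace.exp_zero]
  calc Tgrp E r⁻¹ (Tgrp E r x) = (Tgrp E r⁻¹ * Tgrp E r) x := rfl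
    _ = x := by rw [h]; rfl

theorem continuousOn_Tgrp {d : ℕ} (E : EuclideanSpace ℝ (Fin d) →L[ℝ] EuclideanSpace ℝ (Fin d)) :
    ContinuousOn (fun r : ℝ => Tgrp E r) (Set.Ioi (0 : ℝ)) := by
  let +nondep : NormedAlgebra ℚ (EuclideanSpace ℝ (Fin d) →L[ℝ] EuclideanSpace ℝ (Fin d)) :=
    .restrictScalars ℚ ℝ _
  apply Continuous.comp_continuousOn (NormedSpace.exp_continuous)
  exact (Real.continuousOn_log.mono (fun x hx => ne_of_gt hx)).smul continuousOn_const

/-- If `P` is continuous, positive definite, and some exponent `E` of `P` has purely real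
spectrum (its characteristic polynomial splits over `ℝ`), then `{r^E}` is contracting and
hence `P` is positive homogeneous. -/
theorem real_spectrum_exponent_contracting {d : ℕ}
    (P : EuclideanSpace ℝ (Fin d) → ℝ)
    (hc : Continuous P) (hnn : ∀ x, 0 ≤ P x) (hpd : ∀ x, P x = 0 → x = 0)
    (E : EuclideanSpace ℝ (Fin d) →L[ℝ] EuclideanSpace ℝ (Fin d))
    (hE : IsExpOf P E)
    (hspec : (LinearMap.charpoly
      (E : EuclideanSpace ℝ (Fin d) →ₗ[ℝ] EuclideanSpace ℝ (Fin d))).Splits) :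
    IsContracting E ∧ IsPosHom P := by
  have hIC : IsContracting E := contracting_of_hyps hc hnn hpd hE hspec
  refine ⟨hIC, hc, hnn, hpd, ⟨E, hE⟩, ?_⟩
  rcases subsingleton_or_nontrivial (EuclideanSpace ℝ (Fin d)) with hsub | hnt
  · haveI : Finite (EuclideanSpace ℝ (Fin d)) := Finite.of_subsingleton
    rw [Filter.cocompact_eq_bot]
    exact tendsto_bot
  · obtain ⟨v₁, hv₁⟩ := exists_norm_eq (EuclideanSpace ℝ (Fin d)) (zero_le_one)
    obtain ⟨w, hw_mem, hw_min⟩ := (isCompact_sphere (0 : EuclideanSpace ℝ (Fin d)) 1).exists_isMinOn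
      ⟨v₁, by rwa [mem_sphere_zero_iff_norm]⟩ hc.continuousOn
    have hw_norm : ‖w‖ = 1 := mem_sphere_zero_iff_norm.1 hw_mem
    have hw0 : w ≠ 0 := by
      intro h; rw [h, norm_zero] at hw_norm; exact one_ne_zero hw_norm.symm
    have hm : 0 < P w := by
      rcases (hnn w).lt_or_eq with h | h
      · exact h
      · exact absurd (hpd w h.symm) hw0
    rw [tendsto_atTop]
    intro N
    set T0 : ℝ := max 1 (N / P w) with hT0
    have hT0pos : (0 : ℝ) < T0 := lt_of_lt_of_le one_pos (le_max_left _ _)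
    obtain ⟨M, hM1, hMb⟩ : ∃ M : ℝ, 1 ≤ M ∧ ∀ r : ℝ, 0 < r → r ≤ T0 → ‖Tgrp E r‖ ≤ M := by
      have h1 : {r : ℝ | ‖Tgrp E r‖ < 1} ∈ nhdsWithin 0 (Set.Ioi (0:ℝ)) :=
        hIC (Iio_mem_nhds one_pos)
      obtain ⟨δ, hδpos, hδ⟩ := Metric.mem_nhdsWithin_iff.1 h1
      set δ' : ℝ := min (δ / 2) T0 with hδ'
      have hδ'pos : 0 < δ' := lt_min (by linarith) hT0pos
      obtain ⟨C, hC⟩ := (isCompact_Icc (a := δ') (b := T0)).exists_bound_of_continuousOn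
        ((continuousOn_Tgrp E).mono (fun r hr => lt_of_lt_of_le hδ'pos hr.1))
      refine ⟨max 1 C, le_max_left _ _, fun r hr hrT0 => ?_⟩
      rcases lt_or_ge r δ' with h | h
      · have hball : r ∈ Metric.ball (0 : ℝ) δ ∩ Set.Ioi 0 := by
          constructor
          · rw [Metric.mem_ball, Real.dist_eq, sub_zero, abs_of_pos hr]
            have : δ' ≤ δ / 2 := min_le_left _ _
            linarith
          · exact hr
        exact (hδ hball).le.trans (le_max_left _ _)
      · exact (hC r ⟨h, hrT0⟩).trans (le_max_right _ _)
    refine Filter.mem_cocompact.2 ⟨Metric.closedBall 0 M, isCompact_closedBall _ _,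
      fun x hx => ?_⟩
    have hxnorm : M < ‖x‖ := by
      by_contra hle
      push_neg at hle
      exact hx (by rwa [Metric.mem_closedBall, dist_zero_right])
    have hxpos : 0 < ‖x‖ := lt_of_lt_of_le (lt_of_lt_of_le one_pos hM1) hxnorm.le
    have hx0 : x ≠ 0 := by
      intro h; rw [h, norm_zero] at hxpos; exact lt_irrefl 0 hxpos
    have hev : ∀ᶠ r in nhdsWithin 0 (Set.Ioi (0:ℝ)),
        ‖Tgrp E r‖ < ‖x‖⁻¹ ∧ r ∈ Set.Ioo (0:ℝ) 1 := by
      filter_upwards [hIC (Iio_mem_nhds (inv_pos.2 hxpos)),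
        Ioo_mem_nhdsGT_of_mem (show (0:ℝ) ∈ Set.Ico (0:ℝ) 1 from ⟨le_refl 0, one_pos⟩)]
        with r h1 h2
      exact ⟨h1, h2⟩
    obtain ⟨s, hs1, hs2⟩ := hev.exists
    have hspos : 0 < s := hs2.1
    have hfs : ‖Tgrp E s x‖ < 1 := by
      calc ‖Tgrp E s x‖ ≤ ‖Tgrp E s‖ * ‖x‖ := (Tgrp E s).le_opNorm x
        _ < ‖x‖⁻¹ * ‖x‖ := mul_lt_mul_of_pos_right hs1 hxpos
        _ = 1 := inv_mul_cancel₀ (ne_of_gt hxpos)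
    have hf1 : ‖Tgrp E 1 x‖ = ‖x‖ := by rw [Tgrp_one, ContinuousLinearMap.one_apply]
    have hcont : ContinuousOn (fun r : ℝ => ‖Tgrp E r x‖) (Set.Icc s 1) := by
      apply ContinuousOn.norm
      exact (ContinuousLinearMap.apply ℝ (EuclideanSpace ℝ (Fin d)) x).continuous.comp_continuousOn
        ((continuousOn_Tgrp E).mono (fun r hr => lt_of_lt_of_le hspos hr.1))
    have h1mem : (1 : ℝ) ∈ Set.Icc (‖Tgrp E s x‖) (‖Tgrp E 1 x‖) := by
      constructor
      · exact hfs.le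
      · rw [hf1]; linarith
    obtain ⟨s₀, hs₀mem, hfs₀⟩ := intermediate_value_Icc hs2.2.le hcont h1mem
    have hs₀pos : 0 < s₀ := lt_of_lt_of_le hspos hs₀mem.1
    set u := Tgrp E s₀ x with hu
    have hu_norm : ‖u‖ = 1 := hfs₀
    have hxu : Tgrp E s₀⁻¹ u = x := Tgrp_inv_apply E hs₀pos x
    have hPx : P x = s₀⁻¹ * P u := by
      conv_lhs => rw [← hxu]
      exact hE s₀⁻¹ (inv_pos.2 hs₀pos) u
    have hPu : P w ≤ P u := hw_min (by rwa [mem_sphere_zero_iff_norm])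
    have hbig : T0 < s₀⁻¹ := by
      by_contra hle
      push_neg at hle
      have h5 : ‖x‖ ≤ M := by
        rw [← hxu]
        calc ‖Tgrp E s₀⁻¹ u‖ ≤ ‖Tgrp E s₀⁻¹‖ * ‖u‖ := (Tgrp E s₀⁻¹).le_opNorm u
          _ = ‖Tgrp E s₀⁻¹‖ := by rw [hu_norm, mul_one]
          _ ≤ M := hMb _ (inv_pos.2 hs₀pos) hle
      linarith
    show N ≤ P x
    have h6 : N ≤ T0 * P w := by
      have h7 : N / P w ≤ T0 := le_max_right _ _
      calc N = (N / P w) * P w := (div_mul_cancel₀ N hm.ne').symm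
        _ ≤ T0 * P w := mul_le_mul_of_nonneg_right h7 hm.le
    have h8 : T0 * P w ≤ s₀⁻¹ * P u :=
      mul_le_mul hbig.le hPu hm.le (le_of_lt (inv_pos.2 hs₀pos))
    linarith [hPx]
end

section
/- Let P be a positive homogeneous function on R^d and P̃ a complex-valued continuous function on a neighborhood of 0. The following are equivalent: (a) P̃(ξ) = o(P(ξ)) as ξ → 0; (b) for every E ∈ Exp(P), P̃ is subhomogeneous with respect to E; (c) there exists E ∈ Exp(P) such that P̃ is subhomogeneous with respect to E. -/
open MeasureTheory Filter Set

set_option synthInstance.maxHeartbeats 1000000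
set_option maxHeartbeats 2000000

/-- `Q` is subhomogeneous with respect to `E`: for every `ε > 0` and compact `K`,
there is `δ > 0` with `|Q(r^E ξ)| ≤ ε r` for all `0 < r < δ` and `ξ ∈ K`. -/
def Subhom {d : ℕ} (Q : EuclideanSpace ℝ (Fin d) → ℂ)
    (E : EuclideanSpace ℝ (Fin d) →L[ℝ] EuclideanSpace ℝ (Fin d)) : Prop :=
  ∀ ε : ℝ, 0 < ε → ∀ K : Set (EuclideanSpace ℝ (Fin d)), IsCompact K →
    ∃ δ : ℝ, 0 < δ ∧ ∀ r : ℝ, 0 < r → r < δ → ∀ ξ ∈ K, ‖Q (Tgrp E r ξ)‖ ≤ ε * r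

lemma Tgrp_one_apply {d : ℕ} (E : EuclideanSpace ℝ (Fin d) →L[ℝ] EuclideanSpace ℝ (Fin d))
    (x : EuclideanSpace ℝ (Fin d)) : Tgrp E 1 x = x := by
  have h0 : Real.log 1 • E = 0 := by ext y i; simp [Real.log_one]
  rw [Tgrp, h0, NormedSpace.exp_zero, ContinuousLinearMap.one_apply]

lemma Tgrp_mul_apply {d : ℕ} (E : EuclideanSpace ℝ (Fin d) →L[ℝ] EuclideanSpace ℝ (Fin d))
    {r s : ℝ} (hr : 0 < r) (hs : 0 < s) (x : EuclideanSpace ℝ (Fin d)) :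
    Tgrp E r (Tgrp E s x) = Tgrp E (r * s) x := by
  have hc : Commute (Real.log r • E) (Real.log s • E) := by
    ext y i
    simp only [ContinuousLinearMap.mul_apply, ContinuousLinearMap.smul_apply, _root_.map_smul,
      PiLp.smul_apply, smul_eq_mul]
    ring
  have hadd : Real.log (r * s) • E = Real.log r • E + Real.log s • E := by
    ext y i
    simp [Real.log_mul hr.ne' hs.ne', add_mul, add_smul]
  rw [Tgrp, Tgrp, Tgrp, hadd, NormedSpace.exp_add_of_commute_of_mem_ball (𝕂 := ℝ) hc
      ((NormedSpace.expSeries_radius_eq_top ℝ (EuclideanSpace ℝ (Fin d) →L[ℝ] EuclideanSpace ℝ (Fin d))).symm ▸ edist_lt_top _ _)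
      ((NormedSpace.expSeries_radius_eq_top ℝ (EuclideanSpace ℝ (Fin d) →L[ℝ] EuclideanSpace ℝ (Fin d))).symm ▸ edist_lt_top _ _),
    ContinuousLinearMap.mul_apply]

lemma isPosHom_zero {d : ℕ} {P : EuclideanSpace ℝ (Fin d) → ℝ} (hP : IsPosHom P) : P 0 = 0 := by
  obtain ⟨E, hE⟩ := hP.2.2.2.1
  have h := hE 2 two_pos 0
  rw [map_zero] at h
  linarith

lemma isCompact_sublevel {d : ℕ} {P : EuclideanSpace ℝ (Fin d) → ℝ} (hP : IsPosHom P) :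
    IsCompact {x : EuclideanSpace ℝ (Fin d) | P x ≤ 1} := by
  have h2 : ∀ᶠ x in Filter.cocompact (EuclideanSpace ℝ (Fin d)), (2:ℝ) ≤ P x :=
    hP.2.2.2.2.eventually_ge_atTop 2
  rw [Filter.eventually_iff, Filter.mem_cocompact] at h2
  obtain ⟨t, htc, hsub⟩ := h2
  refine htc.of_isClosed_subset (isClosed_le hP.1 continuous_const) ?_
  intro x hx
  by_contra hxt
  have : (2:ℝ) ≤ P x := hsub hxt
  exact absurd hx (by simp only [mem_setOf_eq]; linarith)

lemma sublevel_mem_nhds {d : ℕ} {P : EuclideanSpace ℝ (Fin d) → ℝ} (hP : IsPosHom P)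
    {V : Set (EuclideanSpace ℝ (Fin d))} (hV : V ∈ nhds 0) :
    ∃ c : ℝ, 0 < c ∧ ∀ x, P x ≤ c → x ∈ V := by
  obtain ⟨O, hOV, hOopen, hO0⟩ := mem_nhds_iff.mp hV
  have hK1 := isCompact_sublevel hP
  set C : Set (EuclideanSpace ℝ (Fin d)) := {x | P x ≤ 1} ∩ Oᶜ with hC
  have hCc : IsCompact C := hK1.inter_right hOopen.isClosed_compl
  rcases C.eq_empty_or_nonempty with hCe | hCne
  · refine ⟨1, one_pos, fun x hx => ?_⟩
    by_contra hxV
    have hxO : x ∉ O := fun h => hxV (hOV h)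
    have hmemC : x ∈ C := ⟨hx, hxO⟩
    rw [hCe] at hmemC
    exact hmemC
  · obtain ⟨x₀, hx₀C, hmin⟩ := hCc.exists_isMinOn hCne hP.1.continuousOn
    have hm : 0 < P x₀ := by
      rcases lt_or_eq_of_le (hP.2.1 x₀) with h | h
      · exact h
      · exact absurd (hP.2.2.1 x₀ h.symm) (fun hx => hx₀C.2 (hx ▸ hO0))
    refine ⟨min (P x₀ / 2) 1, by positivity, fun x hx => ?_⟩
    have hx1 : P x ≤ 1 := le_trans hx (min_le_right _ _)
    by_contra hxV
    have hxO : x ∉ O := fun h => hxV (hOV h)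
    have hxC : x ∈ C := ⟨hx1, hxO⟩
    have hge : P x₀ ≤ P x := hmin hxC
    have hle2 : P x ≤ P x₀ / 2 := le_trans hx (min_le_left _ _)
    linarith

/-- For positive homogeneous `P` and continuous (near `0`) `P̃`, the following are
equivalent: (a) `P̃(ξ) = o(P(ξ))` as `ξ → 0`; (b) `P̃` is subhomogeneous with respect to
every `E ∈ Exp(P)`; (c) `P̃` is subhomogeneous with respect to some `E ∈ Exp(P)`. -/
theorem subhomogeneous_iff_littleO {d : ℕ}
    (P : EuclideanSpace ℝ (Fin d) → ℝ) (hP : IsPosHom P)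
    (Ptil : EuclideanSpace ℝ (Fin d) → ℂ)
    (U : Set (EuclideanSpace ℝ (Fin d))) (hU : U ∈ nhds (0 : EuclideanSpace ℝ (Fin d)))
    (hPtil : ContinuousOn Ptil U) :
    List.TFAE [
      Ptil =o[nhds (0 : EuclideanSpace ℝ (Fin d))] P,
      ∀ E, IsExpOf P E → Subhom Ptil E,
      ∃ E, IsExpOf P E ∧ Subhom Ptil E] := by
  tfae_have 1 → 2 := by
    intro h E hE ε hε K hK
    -- bound P on K
    obtain ⟨M, hM0, hMK⟩ : ∃ M : ℝ, 0 ≤ M ∧ ∀ ξ ∈ K, P ξ ≤ M := by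
      rcases K.eq_empty_or_nonempty with hKe | hKne
      · exact ⟨0, le_refl 0, by simp [hKe]⟩
      · obtain ⟨ξ₀, _, hmax⟩ := hK.exists_isMaxOn hKne hP.1.continuousOn
        exact ⟨P ξ₀, hP.2.1 ξ₀, fun ξ hξ => hmax hξ⟩
    have hM1 : (0:ℝ) < M + 1 := by linarith
    set ε' : ℝ := ε / (M + 1) with hε'
    have hε'pos : 0 < ε' := div_pos hε hM1
    have hev : ∀ᶠ x in nhds (0 : EuclideanSpace ℝ (Fin d)), ‖Ptil x‖ ≤ ε' * ‖P x‖ :=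
      (Asymptotics.isLittleO_iff.mp h) hε'pos
    obtain ⟨c, hc, hcV⟩ := sublevel_mem_nhds hP hev
    refine ⟨c / (M + 1), div_pos hc hM1, fun r hr hrδ ξ hξ => ?_⟩
    have hPr : P (Tgrp E r ξ) = r * P ξ := hE r hr ξ
    have hle : P (Tgrp E r ξ) ≤ c := by
      rw [hPr]
      have h1 : r * P ξ ≤ r * (M + 1) := by
        have := hMK ξ hξ
        nlinarith
      have h2 : r * (M + 1) < c := (lt_div_iff₀ hM1).mp hrδ
      linarith
    have hb : ‖Ptil (Tgrp E r ξ)‖ ≤ ε' * ‖P (Tgrp E r ξ)‖ := hcV _ hle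
    have hPnn : 0 ≤ P (Tgrp E r ξ) := hP.2.1 _
    rw [Real.norm_eq_abs, abs_of_nonneg hPnn, hPr] at hb
    calc ‖Ptil (Tgrp E r ξ)‖ ≤ ε' * (r * P ξ) := hb
      _ ≤ ε' * (r * (M + 1)) := by
          have hPM : P ξ ≤ M + 1 := by linarith [hMK ξ hξ]
          exact mul_le_mul_of_nonneg_left (mul_le_mul_of_nonneg_left hPM hr.le) hε'pos.le
      _ = ε * r := by rw [hε', div_mul_eq_mul_div, div_eq_iff hM1.ne']; ring
  tfae_have 2 → 3 := by
    intro h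
    obtain ⟨E, hE⟩ := hP.2.2.2.1
    exact ⟨E, hE, h E hE⟩
  tfae_have 3 → 1 := by
    rintro ⟨E, hE, hsub⟩
    have hP0 : P 0 = 0 := isPosHom_zero hP
    -- Ptil 0 = 0
    have hPt0 : ‖Ptil 0‖ = 0 := by
      obtain ⟨δ₀, hδ₀, h0⟩ := hsub 1 one_pos {0} isCompact_singleton
      have key : ∀ r : ℝ, 0 < r → r < δ₀ → ‖Ptil 0‖ ≤ r := by
        intro r h1 h2
        have := h0 r h1 h2 0 rfl
        rw [map_zero] at this
        linarith
      by_contra hne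
      have hpos : 0 < ‖Ptil 0‖ := lt_of_le_of_ne (norm_nonneg _) (Ne.symm hne)
      have h1 : (0:ℝ) < min (‖Ptil 0‖ / 2) (δ₀ / 2) := by positivity
      have h2 : min (‖Ptil 0‖ / 2) (δ₀ / 2) < δ₀ :=
        lt_of_le_of_lt (min_le_right _ _) (by linarith)
      have := key _ h1 h2
      have := min_le_left (‖Ptil 0‖ / 2) (δ₀ / 2)
      linarith
    rw [Asymptotics.isLittleO_iff]
    intro c hc
    set S : Set (EuclideanSpace ℝ (Fin d)) := {x | P x = 1} with hS
    have hSc : IsCompact S := by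
      refine (isCompact_sublevel hP).of_isClosed_subset
        (isClosed_eq hP.1 continuous_const) ?_
      intro x hx
      simp only [hS, mem_setOf_eq] at hx ⊢
      linarith [hx]
    obtain ⟨δ, hδ, hbd⟩ := hsub c hc S hSc
    have hmem : {x | P x < δ} ∈ nhds (0 : EuclideanSpace ℝ (Fin d)) := by
      have hopen : IsOpen {x : EuclideanSpace ℝ (Fin d) | P x < δ} :=
        isOpen_lt hP.1 continuous_const
      exact hopen.mem_nhds (by simp [hP0, hδ])
    filter_upwards [hmem] with x hx
    rcases eq_or_ne x 0 with rfl | hx0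
    · rw [hPt0, hP0]
      simp
    · have hpx : 0 < P x := by
        rcases lt_or_eq_of_le (hP.2.1 x) with h | h
        · exact h
        · exact absurd (hP.2.2.1 x h.symm) hx0
      set ξ := Tgrp E (P x)⁻¹ x with hξdef
      have hξ : P ξ = 1 := by
        rw [hξdef, hE _ (inv_pos.mpr hpx), inv_mul_cancel₀ hpx.ne']
      have hxξ : Tgrp E (P x) ξ = x := by
        rw [hξdef, Tgrp_mul_apply E hpx (inv_pos.mpr hpx), mul_inv_cancel₀ hpx.ne',
          Tgrp_one_apply]
      have hb := hbd (P x) hpx hx ξ hξ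
      rw [hxξ] at hb
      calc ‖Ptil x‖ ≤ c * P x := hb
        _ = c * ‖P x‖ := by rw [Real.norm_eq_abs, abs_of_nonneg (hP.2.1 x)]
  tfae_finish
end
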